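/- Every valid LCSk chain yields a common subsequence: if (i_1,j_1),...,(i_ℓ,j_ℓ) is a chain of non-overlapping k-matchings of A and B, then the concatenation A[i_1..i_1+k-1] · A[i_2..i_2+k-1] · ... · A[i_ℓ..i_ℓ+k-1] is a common subsequence of A and B of length k·ℓ; hence LCS(A,B) ≥ k·LCSk(A,B). -/

import Mathlib

/-- `c` is a valid chain of non-overlapping `k`-matchings between `A` and `B`
(0-based starting indices). -/
def IsKChain {α : Type*} (A B : List α) (k : ℕ) (c : List (ℕ × ℕ)) : Prop :=
  c.Chain' (fun p q => p.1 + k ≤ q.1 ∧ p.2 + k ≤ q.2) ∧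
  ∀ p ∈ c, p.1 + k ≤ A.length ∧ p.2 + k ≤ B.length ∧
    ∀ f < k, A[p.1 + f]? = B[p.2 + f]?

/-- `LCSk A B k`: maximal number of order-preserving non-overlapping common
`k`-length substrings. -/
noncomputable def LCSk {α : Type*} (A B : List α) (k : ℕ) : ℕ :=
  sSup {l | ∃ c, IsKChain A B k c ∧ c.length = l}

/-- Classical longest common subsequence length. -/
noncomputable def LCS {α : Type*} (A B : List α) : ℕ :=
  sSup {l | ∃ C : List α, C.Sublist A ∧ C.Sublist B ∧ C.length = l}

lemma take_drop_eq_of_match {α : Type*} (A B : List α) (k i j : ℕ)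
    (h : ∀ f < k, A[i + f]? = B[j + f]?) :
    (A.drop i).take k = (B.drop j).take k := by
  apply List.ext_getElem?
  intro n
  by_cases hn : n < k
  · rw [List.getElem?_take, List.getElem?_take, if_pos hn, if_pos hn,
      List.getElem?_drop, List.getElem?_drop, h n hn]
  · rw [List.getElem?_take, List.getElem?_take, if_neg hn, if_neg hn]

lemma chain_flatten_sublist {α : Type*} (A : List α) (k : ℕ) :
    ∀ (c : List ℕ) (n : ℕ), c.Chain' (fun a b => a + k ≤ b) →
    (∀ p ∈ c.head?, n ≤ p) →
    ((c.map (fun i => (A.drop i).take k)).flatten).Sublist (A.drop n) := by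
  intro c
  induction c with
  | nil => intro n _ _; simp
  | cons i c ih =>
    intro n hchain hhead
    have hni : n ≤ i := hhead i rfl
    have hchain' := hchain.tail
    have hhead' : ∀ p ∈ c.head?, i + k ≤ p := by
      intro p hp
      cases c with
      | nil => simp at hp
      | cons q c' =>
        simp only [List.head?_cons, Option.mem_def, Option.some.injEq] at hp
        subst hp
        exact (List.isChain_cons_cons.mp hchain).1
    have hrest := ih (i + k) hchain' hhead'
    have hsplit : (A.drop i).take k ++ A.drop (i + k) = A.drop i := by
      rw [← List.drop_drop, List.take_append_drop]
    simp only [List.map_cons, List.flatten_cons]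
    have h1 : ((A.drop i).take k ++ (c.map (fun i => (A.drop i).take k)).flatten).Sublist
        ((A.drop i).take k ++ A.drop (i + k)) :=
      List.Sublist.append (List.Sublist.refl _) hrest
    rw [hsplit] at h1
    refine h1.trans ?_
    rw [show A.drop i = (A.drop n).drop (i - n) by
      rw [List.drop_drop]; congr 1; omega]
    exact List.drop_sublist _ _

lemma kchain_main {α : Type*} (A B : List α) (k : ℕ)
    (c : List (ℕ × ℕ)) (hc : IsKChain A B k c) :
    ((c.map (fun p => ((A.drop p.1).take k))).flatten.Sublist A ∧
     (c.map (fun p => ((A.drop p.1).take k))).flatten.Sublist B ∧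
     (c.map (fun p => ((A.drop p.1).take k))).flatten.length = k * c.length) := by
  obtain ⟨hchain, hmem⟩ := hc
  have hA : (c.map (fun p => ((A.drop p.1).take k))).flatten.Sublist A := by
    have : c.map (fun p => ((A.drop p.1).take k)) =
        (c.map Prod.fst).map (fun i => (A.drop i).take k) := by
      rw [List.map_map]; rfl
    rw [this]
    have := chain_flatten_sublist A k (c.map Prod.fst) 0
      (List.isChain_map_of_isChain Prod.fst (fun a b h => h.1) hchain)
      (by simp)
    simpa using this
  have hBeq : c.map (fun p => ((A.drop p.1).take k)) =
      (c.map Prod.snd).map (fun j => (B.drop j).take k) := by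
    rw [List.map_map]
    apply List.map_congr_left
    intro p hp
    exact take_drop_eq_of_match A B k p.1 p.2 (hmem p hp).2.2
  have hB : (c.map (fun p => ((A.drop p.1).take k))).flatten.Sublist B := by
    rw [hBeq]
    have := chain_flatten_sublist B k (c.map Prod.snd) 0
      (List.isChain_map_of_isChain Prod.snd (fun a b h => h.2) hchain)
      (by simp)
    simpa using this
  refine ⟨hA, hB, ?_⟩
  rw [List.length_flatten]
  have : (c.map (fun p => ((A.drop p.1).take k))).map List.length =
      c.map (fun _ => k) := by
    rw [List.map_map]
    apply List.map_congr_left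
    intro p hp
    simp only [Function.comp_apply, List.length_take, List.length_drop]
    have := (hmem p hp).1
    omega
  rw [this]
  simp [mul_comm]

/-- every valid chain of non-overlapping `k`-matchings yields,
by concatenating the matched `k`-length substrings of `A`, a common subsequence
of `A` and `B` of length `k·ℓ`; hence `k·LCSk(A,B) ≤ LCS(A,B)`. -/
theorem chain_yields_common_subsequence {α : Type*} (A B : List α) (k : ℕ)
    (hk : 1 ≤ k) :
    (∀ c : List (ℕ × ℕ), IsKChain A B k c →
      ((c.map (fun p => ((A.drop p.1).take k))).flatten.Sublist A ∧
       (c.map (fun p => ((A.drop p.1).take k))).flatten.Sublist B ∧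
       (c.map (fun p => ((A.drop p.1).take k))).flatten.length = k * c.length)) ∧
    k * LCSk A B k ≤ LCS A B := by
  refine ⟨fun c hc => kchain_main A B k c hc, ?_⟩
  -- the LCSk set is nonempty and bounded above
  have hne : {l | ∃ c, IsKChain A B k c ∧ c.length = l}.Nonempty :=
    ⟨0, [], ⟨List.isChain_nil, by simp⟩, rfl⟩
  have hbdd : BddAbove {l | ∃ c, IsKChain A B k c ∧ c.length = l} := by
    refine ⟨A.length, ?_⟩
    rintro l ⟨c, hc, rfl⟩
    obtain ⟨hA, _, hlen⟩ := kchain_main A B k c hc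
    have := hA.length_le
    rw [hlen] at this
    calc c.length ≤ k * c.length := Nat.le_mul_of_pos_left _ hk
      _ ≤ A.length := this
  have hmem := Nat.sSup_mem hne hbdd
  obtain ⟨c, hc, hclen⟩ := hmem
  obtain ⟨hA, hB, hlen⟩ := kchain_main A B k c hc
  have hLCSbdd : BddAbove {l | ∃ C : List α, C.Sublist A ∧ C.Sublist B ∧ C.length = l} := by
    refine ⟨A.length, ?_⟩
    rintro l ⟨C, hCA, _, rfl⟩
    exact hCA.length_le
  have : k * LCSk A B k ∈ {l | ∃ C : List α, C.Sublist A ∧ C.Sublist B ∧ C.length = l} := by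
    refine ⟨(c.map (fun p => ((A.drop p.1).take k))).flatten, hA, hB, ?_⟩
    rw [hlen, hclen]; rfl
  exact le_csSup hLCSbdd this
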